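/- Let X be a nonnegative random variable with mean μ > 0 and variance σ² satisfying σ² ≤ C μ² / n² for constants C > 0 and n ≥ 1. Then |E[√X] − √μ| ≤ K √μ / n² for some constant K depending only on C. -/

import Mathlib

open MeasureTheory ProbabilityTheory

/-- Delta-method lemma: if a nonnegative random variable `X` has mean `μ > 0` and
variance `σ² ≤ C μ²/n²`, then `|E[√X] − √μ| ≤ K √μ/n²` with `K` depending only on `C`. -/
theorem delta_method_sqrt (C : ℝ) (hC : 0 < C) :
    ∃ K : ℝ, ∀ (n : ℕ), 1 ≤ n →
      ∀ (Ω : Type) (_ : MeasurableSpace Ω) (P : Measure Ω), IsProbabilityMeasure P →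
        ∀ (X : Ω → ℝ), MemLp X 2 P → (∀ ω, 0 ≤ X ω) →
          ∀ (μ : ℝ), ∫ ω, X ω ∂P = μ → 0 < μ →
            variance X P ≤ C * μ ^ 2 / (n : ℝ) ^ 2 →
            |(∫ ω, Real.sqrt (X ω) ∂P) - Real.sqrt μ| ≤ K * Real.sqrt μ / (n : ℝ) ^ 2 := by
  refine ⟨C / 2, fun n hn Ω _ P hP X hX2 hXnn μ hmean hμ hvar => ?_⟩
  set s := Real.sqrt μ with hs
  have hs0 : 0 < s := Real.sqrt_pos.2 hμ
  have hs2 : s ^ 2 = μ := Real.sq_sqrt hμ.le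
  have hn0 : (0:ℝ) < (n:ℝ) ^ 2 := by positivity
  have hX1 : Integrable X P := hX2.integrable one_le_two
  have hsm : AEStronglyMeasurable (fun ω => Real.sqrt (X ω)) P :=
    Real.continuous_sqrt.comp_aestronglyMeasurable hX2.aestronglyMeasurable
  have hsqrtX : Integrable (fun ω => Real.sqrt (X ω)) P := by
    refine (hX1.add (integrable_const 1)).mono hsm (ae_of_all _ fun ω => ?_)
    have h0 := hXnn ω
    have h1 : Real.sqrt (X ω) ≤ X ω + 1 := by
      nlinarith [Real.sq_sqrt h0, Real.sqrt_nonneg (X ω)]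
    simp only [Pi.add_apply, Real.norm_eq_abs]
    rw [abs_of_nonneg (Real.sqrt_nonneg _), abs_of_nonneg (by norm_num; linarith : (0:ℝ) ≤ X ω + 1)]
    norm_num; exact h1
  have hVint : Integrable (fun ω => (Real.sqrt (X ω) - s) ^ 2) P := by
    have heq : (fun ω => (Real.sqrt (X ω) - s) ^ 2)
        = fun ω => X ω - 2 * s * Real.sqrt (X ω) + s ^ 2 := by
      funext ω
      nlinarith [Real.sq_sqrt (hXnn ω)]
    rw [heq]
    exact (hX1.sub (hsqrtX.const_mul (2 * s))).add (integrable_const _)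
  set V := ∫ ω, (Real.sqrt (X ω) - s) ^ 2 ∂P with hV
  have hVnn : 0 ≤ V := integral_nonneg fun ω => sq_nonneg _
  have hsub : Integrable (fun ω => X ω - μ) P := hX1.sub (integrable_const μ)
  have hd : Integrable (fun ω => (X ω - μ) / (2 * s)) P := hsub.div_const _
  have hg : Integrable (fun ω => s + (X ω - μ) / (2 * s)) P := (integrable_const s).add hd
  -- key identity
  have hkey : (∫ ω, Real.sqrt (X ω) ∂P) = s - V / (2 * s) := by
    have hident : (fun ω => Real.sqrt (X ω))
        = fun ω => (s + (X ω - μ) / (2 * s)) - (Real.sqrt (X ω) - s) ^ 2 / (2 * s) := by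
      funext ω
      have h1 := Real.sq_sqrt (hXnn ω)
      field_simp
      nlinarith [h1, hs2]
    rw [hident, integral_sub hg (hVint.div_const _), integral_div,
      integral_add (integrable_const s) hd,
      integral_const, integral_div, integral_sub hX1 (integrable_const μ),
      integral_const, hmean]
    simp [← hV]
  -- bound V by variance / μ
  have hptwise : ∀ ω, (Real.sqrt (X ω) - s) ^ 2 ≤ (X ω - μ) ^ 2 / μ := by
    intro ω
    have h1 := Real.sq_sqrt (hXnn ω)
    have h2 := Real.sqrt_nonneg (X ω)
    rw [le_div_iff₀ hμ]
    nlinarith [sq_nonneg (Real.sqrt (X ω) + s), sq_nonneg (Real.sqrt (X ω) - s), hs2,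
      mul_nonneg h2 hs0.le]
  have hvarint : Integrable (fun ω => (X ω - μ) ^ 2 / μ) P := by
    have : MemLp (fun ω => X ω - μ) 2 P := hX2.sub (memLp_const μ)
    exact this.integrable_sq.div_const μ
  have hVle : V ≤ variance X P / μ := by
    have h1 : V ≤ ∫ ω, (X ω - μ) ^ 2 / μ ∂P :=
      integral_mono hVint hvarint hptwise
    have h2 : (∫ ω, (X ω - μ) ^ 2 / μ ∂P) = variance X P / μ := by
      rw [integral_div, variance_eq_integral hX2.aestronglyMeasurable.aemeasurable, hmean]
    linarith
  -- conclusion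
  rw [hkey]
  have habs : |s - V / (2 * s) - s| = V / (2 * s) := by
    rw [sub_sub_cancel_left, abs_neg, abs_of_nonneg (by positivity)]
  rw [habs]
  have hVbound : V ≤ C * μ / (n:ℝ) ^ 2 := by
    calc V ≤ variance X P / μ := hVle
    _ ≤ (C * μ ^ 2 / (n:ℝ) ^ 2) / μ := by gcongr
    _ = C * μ / (n:ℝ) ^ 2 := by field_simp
  have : V / (2 * s) ≤ (C * μ / (n:ℝ) ^ 2) / (2 * s) := by gcongr
  refine this.trans (le_of_eq ?_)
  have : μ = s * s := by nlinarith [hs2]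
  rw [this]
  field_simp
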